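/- Let L be a graded semiprime G-graded Lie algebra, and let S and S' be G-graded Lie algebras each containing L as a graded subalgebra and each satisfying the following three properties: (1) for every σ ∈ G and every homogeneous s_σ in the degree-σ component there exists a graded essential ideal I of L with [I, s_σ] ⊆ L; (2) for every homogeneous s_σ and every graded essential ideal I of L, [I, s_σ] = 0 implies s_σ = 0; (3) for every graded essential ideal I of L and every graded derivation δ: I → L of degree σ there exists a homogeneous element s_σ of degree σ such that δ(x) = [s_σ, x] for every x ∈ I. Then there exists a graded Lie algebra isomorphism from S onto S' which is the identity on L. -/

import Mathlib

section

variable {Φ : Type*} [CommRing Φ] {G : Type*} [CommGroup G] [DecidableEq G]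
variable {L : Type*} [LieRing L] [LieAlgebra Φ L]

/-- A graded ideal of the `G`-graded Lie algebra `L`. -/
def IsGradedLieIdeal (ℒ : G → Submodule Φ L) [DirectSum.Decomposition ℒ]
    (I : LieIdeal Φ L) : Prop :=
  ∀ y ∈ I, ∀ σ : G, (DirectSum.decompose ℒ y σ : L) ∈ I

/-- A graded essential ideal of the `G`-graded Lie algebra `L`: a graded ideal
meeting every nonzero graded ideal nontrivially. -/
def IsGradedEssentialLieIdeal (ℒ : G → Submodule Φ L) [DirectSum.Decomposition ℒ]
    (I : LieIdeal Φ L) : Prop :=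
  IsGradedLieIdeal ℒ I ∧
    ∀ K : LieIdeal Φ L, IsGradedLieIdeal ℒ K → K ≠ ⊥ → I ⊓ K ≠ ⊥

/-- `δ : I → L` is a derivation. -/
def IsDerivationOn (I : LieIdeal Φ L) (δ : ↥I →ₗ[Φ] L) : Prop :=
  ∀ x y : ↥I,
    δ ⟨⁅(x : L), (y : L)⁆, I.lie_mem y.2⟩ = ⁅δ x, (y : L)⁆ + ⁅(x : L), δ y⁆

/-- `δ : I → L` is graded of degree `σ`: `δ(I_τ) ⊆ L_{τσ}` for every `τ`. -/
def IsGradedOfDegree (ℒ : G → Submodule Φ L) [DirectSum.Decomposition ℒ]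
    (I : LieIdeal Φ L) (δ : ↥I →ₗ[Φ] L) (σ : G) : Prop :=
  ∀ (τ : G) (x : ↥I), (x : L) ∈ ℒ τ → δ x ∈ ℒ (τ * σ)

end

section Aux
set_option linter.unusedSectionVars false

variable {Φ : Type*} [CommRing Φ] {G : Type*} [CommGroup G] [DecidableEq G]
variable {L : Type*} [LieRing L] [LieAlgebra Φ L]
variable {S : Type*} [LieRing S] [LieAlgebra Φ S]
variable {S' : Type*} [LieRing S'] [LieAlgebra Φ S']

/-- Transfer relation between the two candidate algebras of quotients. -/
def LiftRel (ℒ : G → Submodule Φ L) [DirectSum.Decomposition ℒ]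
    (ι : L →ₗ⁅Φ⁆ S) (ι' : L →ₗ⁅Φ⁆ S') (s : S) (s' : S') : Prop :=
  ∃ I : LieIdeal Φ L, IsGradedEssentialLieIdeal ℒ I ∧
    ∀ x ∈ I, ∃ a : L, ⁅s, ι x⁆ = ι a ∧ ⁅s', ι' x⁆ = ι' a

variable (ℒ : G → Submodule Φ L) [DirectSum.Decomposition ℒ]
variable (𝒮 : G → Submodule Φ S) [DirectSum.Decomposition 𝒮]

theorem aux_sum_lie {α : Type*} (s : Finset α) (f : α → L) (y : L) :
    ⁅∑ i ∈ s, f i, y⁆ = ∑ i ∈ s, ⁅f i, y⁆ := by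
  classical
  induction s using Finset.induction_on with
  | empty => simp
  | insert _ _ h ih => simp [Finset.sum_insert h, add_lie, ih]

theorem aux_lie_sum {α : Type*} (s : Finset α) (f : α → L) (y : L) :
    ⁅y, ∑ i ∈ s, f i⁆ = ∑ i ∈ s, ⁅y, f i⁆ := by
  classical
  induction s using Finset.induction_on with
  | empty => simp
  | insert _ _ h ih => simp [Finset.sum_insert h, lie_add, ih]

theorem aux_liftRel_symm {ι : L →ₗ⁅Φ⁆ S} {ι' : L →ₗ⁅Φ⁆ S'} {s : S} {s' : S'}
    (h : LiftRel ℒ ι ι' s s') : LiftRel ℒ ι' ι s' s := by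
  obtain ⟨I, hI, h⟩ := h
  exact ⟨I, hI, fun x hx => let ⟨a, h1, h2⟩ := h x hx; ⟨a, h2, h1⟩⟩

theorem aux_top_essential : IsGradedEssentialLieIdeal ℒ (⊤ : LieIdeal Φ L) := by
  refine ⟨fun y _ σ => trivial, fun K _ hK => ?_⟩
  simpa using hK

theorem aux_inf_graded {I J : LieIdeal Φ L} (hI : IsGradedLieIdeal ℒ I)
    (hJ : IsGradedLieIdeal ℒ J) : IsGradedLieIdeal ℒ (I ⊓ J) := by
  intro y hy σ
  rw [LieSubmodule.mem_inf] at hy ⊢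
  exact ⟨hI y hy.1 σ, hJ y hy.2 σ⟩

theorem aux_inf_essential {I J : LieIdeal Φ L} (hI : IsGradedEssentialLieIdeal ℒ I)
    (hJ : IsGradedEssentialLieIdeal ℒ J) : IsGradedEssentialLieIdeal ℒ (I ⊓ J) := by
  refine ⟨aux_inf_graded ℒ hI.1 hJ.1, fun K hK hKne => ?_⟩
  have h2 : I ⊓ (J ⊓ K) ≠ ⊥ := hI.2 (J ⊓ K) (aux_inf_graded ℒ hJ.1 hK) (hJ.2 K hK hKne)
  rwa [inf_assoc]

/-- decomposition commutes with the graded embedding. -/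
theorem aux_decompose_map (ι : L →ₗ⁅Φ⁆ S) (hιgr : ∀ σ : G, ∀ x ∈ ℒ σ, ι x ∈ 𝒮 σ)
    (x : L) (τ : G) :
    ((DirectSum.decompose 𝒮 (ι x) τ : ↥(𝒮 τ)) : S) = ι (DirectSum.decompose ℒ x τ : L) := by
  refine DirectSum.Decomposition.inductionOn ℒ
    (motive := fun x => ∀ τ, ((DirectSum.decompose 𝒮 (ι x) τ : ↥(𝒮 τ)) : S)
      = ι (DirectSum.decompose ℒ x τ : L)) (by simp) ?_ ?_ x τ
  · rintro ρ ⟨a, ha⟩ τ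
    by_cases h : ρ = τ
    · subst h
      rw [DirectSum.decompose_of_mem_same 𝒮 (hιgr ρ a ha),
        DirectSum.decompose_of_mem_same ℒ ha]
    · rw [DirectSum.decompose_of_mem_ne 𝒮 (hιgr ρ a ha) h,
        DirectSum.decompose_of_mem_ne ℒ ha h, map_zero ι]
  · intro m m' hm hm' τ
    rw [map_add ι, DirectSum.decompose_add, DirectSum.add_apply, Submodule.coe_add,
      hm τ, hm' τ, DirectSum.decompose_add, DirectSum.add_apply, Submodule.coe_add,
      map_add ι]

theorem aux_mem_iff (ι : L →ₗ⁅Φ⁆ S) (hι : Function.Injective ι)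
    (hιgr : ∀ σ : G, ∀ x ∈ ℒ σ, ι x ∈ 𝒮 σ) (σ : G) (x : L) :
    ι x ∈ 𝒮 σ ↔ x ∈ ℒ σ := by
  constructor
  · intro h
    have h1 : ι ((DirectSum.decompose ℒ x σ : L)) = ι x := by
      rw [← aux_decompose_map ℒ 𝒮 ι hιgr, DirectSum.decompose_of_mem_same 𝒮 h]
    have h2 : (DirectSum.decompose ℒ x σ : L) = x := hι h1
    rw [← h2]; exact (DirectSum.decompose ℒ x σ).2
  · exact hιgr σ x

/-- Given a graded essential ideal `I` of a graded semiprime Lie algebra,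
the ideal spanned by `⁅I, I⁆` is graded essential. -/
theorem aux_bracket_ideal
    (hℒ : ∀ (σ τ : G) (x y : L), x ∈ ℒ σ → y ∈ ℒ τ → ⁅x, y⁆ ∈ ℒ (σ * τ))
    (hsemiprime : ∀ J : LieIdeal Φ L, IsGradedLieIdeal ℒ J → J ≠ ⊥ →
      ⁅J, J⁆ ≠ (⊥ : LieIdeal Φ L))
    {I : LieIdeal Φ L} (hI : IsGradedEssentialLieIdeal ℒ I) :
    ∃ K : LieIdeal Φ L, IsGradedEssentialLieIdeal ℒ K ∧
      ∀ p : L → Prop, p 0 → (∀ a b, p a → p b → p (a + b)) →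
        (∀ (c : Φ) (a), p a → p (c • a)) →
        (∀ u ∈ I, ∀ v ∈ I, p ⁅u, v⁆) → ∀ x ∈ K, p x := by
  classical
  set B : Set L := {x | ∃ u ∈ I, ∃ v ∈ I, ⁅u, v⁆ = x} with hB
  have hBlie : ∀ (z : L), ∀ x ∈ Submodule.span Φ B, ⁅z, x⁆ ∈ Submodule.span Φ B := by
    intro z x hx
    induction hx using Submodule.span_induction with
    | mem x hx =>
      obtain ⟨u, hu, v, hv, rfl⟩ := hx
      rw [leibniz_lie]
      exact Submodule.add_mem _
        (Submodule.subset_span ⟨⁅z, u⁆, I.lie_mem hu, v, hv, rfl⟩)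
        (Submodule.subset_span ⟨u, hu, ⁅z, v⁆, I.lie_mem hv, rfl⟩)
    | zero => simp
    | add x y hx hy ihx ihy => rw [lie_add]; exact Submodule.add_mem _ ihx ihy
    | smul c x hx ihx => rw [lie_smul]; exact Submodule.smul_mem _ _ ihx
  set K : LieIdeal Φ L :=
    { Submodule.span Φ B with lie_mem := fun {z x} hx => hBlie z x hx } with hK
  have hKmem : ∀ x : L, x ∈ K ↔ x ∈ Submodule.span Φ B := fun x => Iff.rfl
  have hbrK : ∀ u ∈ I, ∀ v ∈ I, ⁅u, v⁆ ∈ K := fun u hu v hv =>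
    Submodule.subset_span ⟨u, hu, v, hv, rfl⟩
  have hKgr : IsGradedLieIdeal ℒ K := by
    intro y hy σ
    have happ : ∀ {α : Type _} (s : Finset α) (f : α → L) (σ : G),
        ((DirectSum.decompose ℒ (∑ i ∈ s, f i) σ : ↥(ℒ σ)) : L)
          = ∑ i ∈ s, ((DirectSum.decompose ℒ (f i) σ : ↥(ℒ σ)) : L) := by
      classical
      intro α s f σ
      induction s using Finset.induction_on with
      | empty => simp
      | insert _ _ h ih =>
        rw [Finset.sum_insert h, Finset.sum_insert h, DirectSum.decompose_add,
          DirectSum.add_apply, Submodule.coe_add, ih]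
    have key : ∀ u ∈ I, ∀ v ∈ I, ∀ σ : G,
        (DirectSum.decompose ℒ ⁅u, v⁆ σ : L) ∈ Submodule.span Φ B := by
      intro u hu v hv σ
      have huv : ⁅u, v⁆ = ∑ ρ ∈ (DirectSum.decompose ℒ u).support,
          ∑ τ ∈ (DirectSum.decompose ℒ v).support,
            ⁅(DirectSum.decompose ℒ u ρ : L), (DirectSum.decompose ℒ v τ : L)⁆ := by
        conv_lhs => rw [← DirectSum.sum_support_decompose ℒ u,
          ← DirectSum.sum_support_decompose ℒ v]
        rw [aux_sum_lie]
        exact Finset.sum_congr rfl fun ρ _ => aux_lie_sum _ _ _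
      rw [huv, happ]
      refine Submodule.sum_mem _ fun ρ _ => ?_
      rw [happ]
      refine Submodule.sum_mem _ fun τ _ => ?_
      have hmem : ⁅(DirectSum.decompose ℒ u ρ : L), (DirectSum.decompose ℒ v τ : L)⁆
          ∈ ℒ (ρ * τ) := hℒ ρ τ _ _ (DirectSum.decompose ℒ u ρ).2 (DirectSum.decompose ℒ v τ).2
      by_cases h : ρ * τ = σ
      · rw [DirectSum.decompose_of_mem_same ℒ (h ▸ hmem)]
        exact Submodule.subset_span
          ⟨_, hI.1 u hu ρ, _, hI.1 v hv τ, rfl⟩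
      · rw [DirectSum.decompose_of_mem_ne ℒ hmem h]
        exact Submodule.zero_mem _
    rw [hKmem] at hy
    induction hy using Submodule.span_induction with
    | mem x hx =>
      obtain ⟨u, hu, v, hv, rfl⟩ := hx
      exact key u hu v hv σ
    | zero => simp
    | add x y hx hy ihx ihy =>
      rw [DirectSum.decompose_add, DirectSum.add_apply, Submodule.coe_add]
      exact K.add_mem ihx ihy
    | smul c x hx ihx =>
      rw [DirectSum.decompose_smul, DFinsupp.coe_smul, Pi.smul_apply, Submodule.coe_smul]
      exact K.smul_mem _ ihx
  have hKess : IsGradedEssentialLieIdeal ℒ K := by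
    refine ⟨hKgr, fun K' hK' hne => ?_⟩
    have hJne : I ⊓ K' ≠ ⊥ := hI.2 K' hK' hne
    have hJgr : IsGradedLieIdeal ℒ (I ⊓ K') := by
      intro y hy σ
      rw [LieSubmodule.mem_inf] at hy ⊢
      exact ⟨hI.1 y hy.1 σ, hK' y hy.2 σ⟩
    have hbr := hsemiprime (I ⊓ K') hJgr hJne
    have hle : ⁅I ⊓ K', I ⊓ K'⁆ ≤ K ⊓ K' := by
      rw [LieSubmodule.lieIdeal_oper_eq_span, LieSubmodule.lieSpan_le]
      rintro x ⟨⟨u, hu⟩, ⟨v, hv⟩, rfl⟩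
      rw [LieSubmodule.mem_inf] at hu hv
      exact (LieSubmodule.mem_inf _ _ _).mpr ⟨hbrK u hu.1 v hv.1, K'.lie_mem hv.2⟩
    intro hc
    exact hbr (le_bot_iff.mp (hc ▸ hle))
  refine ⟨K, hKess, ?_⟩
  intro p h0 hadd hsmul hgen x hx
  rw [hKmem] at hx
  induction hx using Submodule.span_induction with
  | mem x hx => obtain ⟨u, hu, v, hv, rfl⟩ := hx; exact hgen u hu v hv
  | zero => exact h0
  | add x y hx hy ihx ihy => exact hadd x y ihx ihy
  | smul c x hx ihx => exact hsmul c x ihx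

theorem aux_uniq (𝒮' : G → Submodule Φ S') [DirectSum.Decomposition 𝒮']
    {ι : L →ₗ⁅Φ⁆ S} (hι : Function.Injective ι) {ι' : L →ₗ⁅Φ⁆ S'}
    (hS'2 : ∀ (σ : G) (s : S'), s ∈ 𝒮' σ →
      ∀ I : LieIdeal Φ L, IsGradedEssentialLieIdeal ℒ I →
        (∀ x ∈ I, ⁅ι' x, s⁆ = 0) → s = 0)
    (σ : G) (s : S) (s'₁ s'₂ : S') (h₁m : s'₁ ∈ 𝒮' σ) (h₂m : s'₂ ∈ 𝒮' σ)
    (h₁ : LiftRel ℒ ι ι' s s'₁) (h₂ : LiftRel ℒ ι ι' s s'₂) : s'₁ = s'₂ := by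
  obtain ⟨I₁, hI₁, hr₁⟩ := h₁
  obtain ⟨I₂, hI₂, hr₂⟩ := h₂
  have h0 : s'₁ - s'₂ = 0 := by
    refine hS'2 σ (s'₁ - s'₂) (sub_mem h₁m h₂m) (I₁ ⊓ I₂)
      (aux_inf_essential ℒ hI₁ hI₂) ?_
    intro x hx
    rw [LieSubmodule.mem_inf] at hx
    obtain ⟨a₁, e₁, e₁'⟩ := hr₁ x hx.1
    obtain ⟨a₂, e₂, e₂'⟩ := hr₂ x hx.2
    have ha : a₁ = a₂ := hι (by rw [← e₁, ← e₂])
    rw [← lie_skew, sub_lie, e₁', e₂', ha, sub_self, neg_zero]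
  exact sub_eq_zero.mp h0

theorem aux_liftRel_add {ι : L →ₗ⁅Φ⁆ S} {ι' : L →ₗ⁅Φ⁆ S'} {s t : S} {s' t' : S'}
    (h₁ : LiftRel ℒ ι ι' s s') (h₂ : LiftRel ℒ ι ι' t t') :
    LiftRel ℒ ι ι' (s + t) (s' + t') := by
  obtain ⟨I₁, hI₁, hr₁⟩ := h₁
  obtain ⟨I₂, hI₂, hr₂⟩ := h₂
  refine ⟨I₁ ⊓ I₂, aux_inf_essential ℒ hI₁ hI₂, fun x hx => ?_⟩
  rw [LieSubmodule.mem_inf] at hx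
  obtain ⟨a₁, e₁, e₁'⟩ := hr₁ x hx.1
  obtain ⟨a₂, e₂, e₂'⟩ := hr₂ x hx.2
  exact ⟨a₁ + a₂, by rw [add_lie, e₁, e₂, map_add ι],
    by rw [add_lie, e₁', e₂', map_add ι']⟩

theorem aux_liftRel_smul {ι : L →ₗ⁅Φ⁆ S} {ι' : L →ₗ⁅Φ⁆ S'} {s : S} {s' : S'} (c : Φ)
    (h : LiftRel ℒ ι ι' s s') : LiftRel ℒ ι ι' (c • s) (c • s') := by
  obtain ⟨I, hI, hr⟩ := h
  refine ⟨I, hI, fun x hx => ?_⟩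
  obtain ⟨a, e, e'⟩ := hr x hx
  exact ⟨c • a, by rw [smul_lie, e, map_smul ι], by rw [smul_lie, e', map_smul ι']⟩

theorem aux_liftRel_iota (ι : L →ₗ⁅Φ⁆ S) (ι' : L →ₗ⁅Φ⁆ S') (a : L) :
    LiftRel ℒ ι ι' (ι a) (ι' a) :=
  ⟨⊤, aux_top_essential ℒ, fun x _ =>
    ⟨⁅a, x⁆, (ι.map_lie a x).symm, (ι'.map_lie a x).symm⟩⟩

theorem aux_bracket_calc {T : Type*} [LieRing T] [LieAlgebra Φ T]
    (j : L →ₗ⁅Φ⁆ T) (u v b₁ b₂ c₁ c₂ A₁ A₂ : L) (s t : T)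
    (h1 : ⁅t, j u⁆ = j b₁) (h2 : ⁅t, j v⁆ = j b₂)
    (h3 : ⁅s, j u⁆ = j c₁) (h4 : ⁅s, j v⁆ = j c₂)
    (h5 : ⁅s, j (⁅b₁, v⁆ + ⁅u, b₂⁆)⁆ = j A₁)
    (h6 : ⁅t, j (⁅c₁, v⁆ + ⁅u, c₂⁆)⁆ = j A₂) :
    ⁅⁅s, t⁆, j ⁅u, v⁆⁆ = j (A₁ - A₂) := by
  have lz : ∀ z : T, ⁅⁅s, t⁆, z⁆ = ⁅s, ⁅t, z⁆⁆ - ⁅t, ⁅s, z⁆⁆ := by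
    intro z
    rw [leibniz_lie s t z]
    abel
  have e1 : ⁅t, ⁅j u, j v⁆⁆ = j (⁅b₁, v⁆ + ⁅u, b₂⁆) := by
    rw [leibniz_lie, h1, h2, map_add j, j.map_lie, j.map_lie]
  have e2 : ⁅s, ⁅j u, j v⁆⁆ = j (⁅c₁, v⁆ + ⁅u, c₂⁆) := by
    rw [leibniz_lie, h3, h4, map_add j, j.map_lie, j.map_lie]
  rw [j.map_lie, lz, e1, e2, h5, h6, map_sub j]

theorem aux_liftRel_lie
    (hℒ : ∀ (σ τ : G) (x y : L), x ∈ ℒ σ → y ∈ ℒ τ → ⁅x, y⁆ ∈ ℒ (σ * τ))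
    (hsemiprime : ∀ J : LieIdeal Φ L, IsGradedLieIdeal ℒ J → J ≠ ⊥ →
      ⁅J, J⁆ ≠ (⊥ : LieIdeal Φ L))
    {ι : L →ₗ⁅Φ⁆ S} {ι' : L →ₗ⁅Φ⁆ S'} {s t : S} {s' t' : S'}
    (h₁ : LiftRel ℒ ι ι' s s') (h₂ : LiftRel ℒ ι ι' t t') :
    LiftRel ℒ ι ι' ⁅s, t⁆ ⁅s', t'⁆ := by
  obtain ⟨Is, hIs, hs⟩ := h₁
  obtain ⟨It, hIt, ht⟩ := h₂
  obtain ⟨K, hK, hKind⟩ :=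
    aux_bracket_ideal ℒ hℒ hsemiprime (aux_inf_essential ℒ hIs hIt)
  refine ⟨K, hK, ?_⟩
  intro x hx
  refine hKind (fun x => ∃ a : L, ⁅⁅s, t⁆, ι x⁆ = ι a ∧ ⁅⁅s', t'⁆, ι' x⁆ = ι' a)
    ?_ ?_ ?_ ?_ x hx
  · exact ⟨0, by simp, by simp⟩
  · rintro a b ⟨p, hp, hp'⟩ ⟨q, hq, hq'⟩
    exact ⟨p + q, by rw [map_add ι, lie_add, hp, hq, map_add ι],
      by rw [map_add ι', lie_add, hp', hq', map_add ι']⟩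
  · rintro c a ⟨p, hp, hp'⟩
    exact ⟨c • p, by rw [map_smul ι, lie_smul, hp, map_smul ι],
      by rw [map_smul ι', lie_smul, hp', map_smul ι']⟩
  · intro u hu v hv
    rw [LieSubmodule.mem_inf] at hu hv
    obtain ⟨b₁, hb₁, hb₁'⟩ := ht u hu.2
    obtain ⟨b₂, hb₂, hb₂'⟩ := ht v hv.2
    obtain ⟨c₁, hc₁, hc₁'⟩ := hs u hu.1
    obtain ⟨c₂, hc₂, hc₂'⟩ := hs v hv.1
    have hBmem : ⁅b₁, v⁆ + ⁅u, b₂⁆ ∈ Is := by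
      refine Is.add_mem (Is.lie_mem hv.1) ?_
      rw [← lie_skew]
      exact neg_mem (Is.lie_mem hu.1)
    have hCmem : ⁅c₁, v⁆ + ⁅u, c₂⁆ ∈ It := by
      refine It.add_mem (It.lie_mem hv.2) ?_
      rw [← lie_skew]
      exact neg_mem (It.lie_mem hu.2)
    obtain ⟨A₁, hA₁, hA₁'⟩ := hs _ hBmem
    obtain ⟨A₂, hA₂, hA₂'⟩ := ht _ hCmem
    exact ⟨A₁ - A₂, aux_bracket_calc ι u v b₁ b₂ c₁ c₂ A₁ A₂ s t hb₁ hb₂ hc₁ hc₂ hA₁ hA₂,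
      aux_bracket_calc ι' u v b₁ b₂ c₁ c₂ A₁ A₂ s' t' hb₁' hb₂' hc₁' hc₂' hA₁' hA₂'⟩

theorem aux_exists (𝒮' : G → Submodule Φ S') [DirectSum.Decomposition 𝒮']
    (h𝒮 : ∀ (σ τ : G) (x y : S), x ∈ 𝒮 σ → y ∈ 𝒮 τ → ⁅x, y⁆ ∈ 𝒮 (σ * τ))
    (ι : L →ₗ⁅Φ⁆ S) (hι : Function.Injective ι)
    (hιgr : ∀ σ : G, ∀ x ∈ ℒ σ, ι x ∈ 𝒮 σ)
    (ι' : L →ₗ⁅Φ⁆ S')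
    (hS1 : ∀ (σ : G) (s : S), s ∈ 𝒮 σ →
      ∃ I : LieIdeal Φ L, IsGradedEssentialLieIdeal ℒ I ∧
        ∀ x ∈ I, ⁅ι x, s⁆ ∈ Set.range ι)
    (hS'3 : ∀ I : LieIdeal Φ L, IsGradedEssentialLieIdeal ℒ I →
      ∀ (σ : G) (δ : ↥I →ₗ[Φ] L), IsDerivationOn I δ → IsGradedOfDegree ℒ I δ σ →
        ∃ s : S', s ∈ 𝒮' σ ∧ ∀ x : ↥I, ι' (δ x) = ⁅s, ι' (x : L)⁆)
    (σ : G) (s : S) (hs : s ∈ 𝒮 σ) :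
    ∃ s' : S', s' ∈ 𝒮' σ ∧ LiftRel ℒ ι ι' s s' := by
  classical
  obtain ⟨I, hI, hIs⟩ := hS1 σ s hs
  have h2 : ∀ x : ↥I, ∃ a : L, ι a = ⁅s, ι (x : L)⁆ := by
    intro x
    obtain ⟨a, ha⟩ := hIs (x : L) x.2
    exact ⟨-a, by rw [map_neg ι, ha, lie_skew]⟩
  choose d hd using h2
  have hadd : ∀ x y : ↥I, d (x + y) = d x + d y := by
    intro x y
    apply hι
    rw [hd, map_add ι, hd, hd, LieSubmodule.coe_add, map_add ι, lie_add]
  have hsmul : ∀ (c : Φ) (x : ↥I), d (c • x) = c • d x := by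
    intro c x
    apply hι
    rw [hd, map_smul ι, hd, LieSubmodule.coe_smul, map_smul ι, lie_smul]
  let δ : ↥I →ₗ[Φ] L :=
    { toFun := d, map_add' := hadd, map_smul' := hsmul }
  have hδ : ∀ x : ↥I, δ x = d x := fun _ => rfl
  have hder : IsDerivationOn I δ := by
    intro x y
    apply hι
    simp only [hδ, hd, map_add ι, ι.map_lie]
    exact leibniz_lie s _ _
  have hgraded : IsGradedOfDegree ℒ I δ σ := by
    intro τ x hx
    have h1 : ι (δ x) ∈ 𝒮 (τ * σ) := by
      rw [hδ, hd]
      have := h𝒮 σ τ s (ι (x : L)) hs (hιgr τ _ hx)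
      rwa [mul_comm σ τ] at this
    exact (aux_mem_iff ℒ 𝒮 ι hι hιgr (τ * σ) _).mp h1
  obtain ⟨s', hs'm, hs'⟩ := hS'3 I hI σ δ hder hgraded
  exact ⟨s', hs'm, I, hI, fun x hx =>
    ⟨d ⟨x, hx⟩, (hd ⟨x, hx⟩).symm, (hs' ⟨x, hx⟩).symm⟩⟩

end Aux


/-- Let `L` be a graded semiprime `G`-graded Lie algebra and
let `S`, `S'` be `G`-graded Lie algebras each containing `L` as a graded
subalgebra (via graded injective Lie algebra homomorphisms `ι`, `ι'`) and each
satisfying: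
(1) every homogeneous `s_σ` is carried into `L` by some graded essential ideal
of `L`;
(2) a homogeneous `s_σ` annihilated by a graded essential ideal of `L` is zero;
(3) every graded derivation of degree `σ` from a graded essential ideal of `L`
into `L` is implemented by a homogeneous element of degree `σ`.
Then there is a graded Lie algebra isomorphism `S ≃ S'` which is the identity
on `L`. -/
theorem maximal_graded_algebra_of_quotients_unique
    {Φ : Type*} [CommRing Φ] {G : Type*} [CommGroup G] [DecidableEq G]
    {L : Type*} [LieRing L] [LieAlgebra Φ L]
    {S : Type*} [LieRing S] [LieAlgebra Φ S]
    {S' : Type*} [LieRing S'] [LieAlgebra Φ S']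
    (ℒ : G → Submodule Φ L) [DirectSum.Decomposition ℒ]
    (hℒ : ∀ (σ τ : G) (x y : L), x ∈ ℒ σ → y ∈ ℒ τ → ⁅x, y⁆ ∈ ℒ (σ * τ))
    (𝒮 : G → Submodule Φ S) [DirectSum.Decomposition 𝒮]
    (h𝒮 : ∀ (σ τ : G) (x y : S), x ∈ 𝒮 σ → y ∈ 𝒮 τ → ⁅x, y⁆ ∈ 𝒮 (σ * τ))
    (𝒮' : G → Submodule Φ S') [DirectSum.Decomposition 𝒮']
    (h𝒮' : ∀ (σ τ : G) (x y : S'), x ∈ 𝒮' σ → y ∈ 𝒮' τ → ⁅x, y⁆ ∈ 𝒮' (σ * τ))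
    -- `L` is graded semiprime:
    (hsemiprime : ∀ J : LieIdeal Φ L, IsGradedLieIdeal ℒ J → J ≠ ⊥ →
      ⁅J, J⁆ ≠ (⊥ : LieIdeal Φ L))
    -- `L` is a graded subalgebra of `S` and of `S'`:
    (ι : L →ₗ⁅Φ⁆ S) (hι : Function.Injective ι)
    (hιgr : ∀ σ : G, ∀ x ∈ ℒ σ, ι x ∈ 𝒮 σ)
    (ι' : L →ₗ⁅Φ⁆ S') (hι' : Function.Injective ι')
    (hι'gr : ∀ σ : G, ∀ x ∈ ℒ σ, ι' x ∈ 𝒮' σ)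
    -- property (1) for `S` and `S'`:
    (hS1 : ∀ (σ : G) (s : S), s ∈ 𝒮 σ →
      ∃ I : LieIdeal Φ L, IsGradedEssentialLieIdeal ℒ I ∧
        ∀ x ∈ I, ⁅ι x, s⁆ ∈ Set.range ι)
    (hS'1 : ∀ (σ : G) (s : S'), s ∈ 𝒮' σ →
      ∃ I : LieIdeal Φ L, IsGradedEssentialLieIdeal ℒ I ∧
        ∀ x ∈ I, ⁅ι' x, s⁆ ∈ Set.range ι')
    -- property (2) for `S` and `S'`:
    (hS2 : ∀ (σ : G) (s : S), s ∈ 𝒮 σ →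
      ∀ I : LieIdeal Φ L, IsGradedEssentialLieIdeal ℒ I →
        (∀ x ∈ I, ⁅ι x, s⁆ = 0) → s = 0)
    (hS'2 : ∀ (σ : G) (s : S'), s ∈ 𝒮' σ →
      ∀ I : LieIdeal Φ L, IsGradedEssentialLieIdeal ℒ I →
        (∀ x ∈ I, ⁅ι' x, s⁆ = 0) → s = 0)
    -- property (3) for `S` and `S'`:
    (hS3 : ∀ I : LieIdeal Φ L, IsGradedEssentialLieIdeal ℒ I →
      ∀ (σ : G) (δ : ↥I →ₗ[Φ] L), IsDerivationOn I δ → IsGradedOfDegree ℒ I δ σ →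
        ∃ s : S, s ∈ 𝒮 σ ∧ ∀ x : ↥I, ι (δ x) = ⁅s, ι (x : L)⁆)
    (hS'3 : ∀ I : LieIdeal Φ L, IsGradedEssentialLieIdeal ℒ I →
      ∀ (σ : G) (δ : ↥I →ₗ[Φ] L), IsDerivationOn I δ → IsGradedOfDegree ℒ I δ σ →
        ∃ s : S', s ∈ 𝒮' σ ∧ ∀ x : ↥I, ι' (δ x) = ⁅s, ι' (x : L)⁆) :
    ∃ φ : S ≃ₗ⁅Φ⁆ S',
      (∀ x : L, φ (ι x) = ι' x) ∧
      ∀ (σ : G) (s : S), s ∈ 𝒮 σ ↔ φ s ∈ 𝒮' σ := by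
    classical
  have ex : ∀ (σ : G) (s : S), s ∈ 𝒮 σ → ∃ s' : S', s' ∈ 𝒮' σ ∧ LiftRel ℒ ι ι' s s' :=
    aux_exists ℒ 𝒮 𝒮' h𝒮 ι hι hιgr ι' hS1 hS'3
  have ex' : ∀ (σ : G) (s' : S'), s' ∈ 𝒮' σ → ∃ s : S, s ∈ 𝒮 σ ∧ LiftRel ℒ ι' ι s' s :=
    aux_exists ℒ 𝒮' 𝒮 h𝒮' ι' hι' hι'gr ι hS'1 hS3
  choose f hf1 hf2 using ex
  choose g hg1 hg2 using ex'
  have uniq' : ∀ (σ : G) (s : S) (s'₁ s'₂ : S'), s'₁ ∈ 𝒮' σ → s'₂ ∈ 𝒮' σ →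
      LiftRel ℒ ι ι' s s'₁ → LiftRel ℒ ι ι' s s'₂ → s'₁ = s'₂ :=
    fun σ s a b ha hb h1 h2 => aux_uniq ℒ 𝒮' hι hS'2 σ s a b ha hb h1 h2
  have uniq : ∀ (σ : G) (s' : S') (s₁ s₂ : S), s₁ ∈ 𝒮 σ → s₂ ∈ 𝒮 σ →
      LiftRel ℒ ι' ι s' s₁ → LiftRel ℒ ι' ι s' s₂ → s₁ = s₂ :=
    fun σ s a b ha hb h1 h2 => aux_uniq ℒ 𝒮 hι' hS2 σ s a b ha hb h1 h2
  have hFchar : ∀ (σ : G) (s : S) (h : s ∈ 𝒮 σ) (w : S'), w ∈ 𝒮' σ →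
      LiftRel ℒ ι ι' s w → f σ s h = w :=
    fun σ s h w hw hr => uniq' σ s _ w (hf1 σ s h) hw (hf2 σ s h) hr
  have hGchar : ∀ (σ : G) (s' : S') (h : s' ∈ 𝒮' σ) (w : S), w ∈ 𝒮 σ →
      LiftRel ℒ ι' ι s' w → g σ s' h = w :=
    fun σ s h w hw hr => uniq σ s _ w (hg1 σ s h) hw (hg2 σ s h) hr
  let F : ∀ σ : G, ↥(𝒮 σ) →ₗ[Φ] S' := fun σ =>
    { toFun := fun x => f σ x x.2
      map_add' := by
        intro x y
        refine hFchar σ _ (x + y).2 _ (add_mem (hf1 σ x x.2) (hf1 σ y y.2)) ?_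
        show LiftRel ℒ ι ι' ((x : S) + (y : S)) _
        exact aux_liftRel_add ℒ (hf2 σ x x.2) (hf2 σ y y.2)
      map_smul' := by
        intro c x
        simp only [RingHom.id_apply]
        refine hFchar σ _ (c • x).2 _ (Submodule.smul_mem _ c (hf1 σ x x.2)) ?_
        show LiftRel ℒ ι ι' (c • (x : S)) _
        exact aux_liftRel_smul ℒ c (hf2 σ x x.2) }
  let Gm : ∀ σ : G, ↥(𝒮' σ) →ₗ[Φ] S := fun σ =>
    { toFun := fun x => g σ x x.2
      map_add' := by
        intro x y
        refine hGchar σ _ (x + y).2 _ (add_mem (hg1 σ x x.2) (hg1 σ y y.2)) ?_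
        show LiftRel ℒ ι' ι ((x : S') + (y : S')) _
        exact aux_liftRel_add ℒ (hg2 σ x x.2) (hg2 σ y y.2)
      map_smul' := by
        intro c x
        simp only [RingHom.id_apply]
        refine hGchar σ _ (c • x).2 _ (Submodule.smul_mem _ c (hg1 σ x x.2)) ?_
        show LiftRel ℒ ι' ι (c • (x : S')) _
        exact aux_liftRel_smul ℒ c (hg2 σ x x.2) }
  let φ : S →ₗ[Φ] S' :=
    (DirectSum.toModule Φ G S' F).comp (DirectSum.decomposeLinearEquiv 𝒮).toLinearMap
  let ψ : S' →ₗ[Φ] S :=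
    (DirectSum.toModule Φ G S Gm).comp (DirectSum.decomposeLinearEquiv 𝒮').toLinearMap
  have hφ : ∀ (σ : G) (s : S) (h : s ∈ 𝒮 σ), φ s = f σ s h := by
    intro σ s h
    show (DirectSum.toModule Φ G S' F) (DirectSum.decomposeLinearEquiv 𝒮 s) = _
    rw [DirectSum.decomposeLinearEquiv_apply, DirectSum.decompose_of_mem 𝒮 h,
      ← DirectSum.lof_eq_of Φ, DirectSum.toModule_lof]
    rfl
  have hψ : ∀ (σ : G) (s' : S') (h : s' ∈ 𝒮' σ), ψ s' = g σ s' h := by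
    intro σ s h
    show (DirectSum.toModule Φ G S Gm) (DirectSum.decomposeLinearEquiv 𝒮' s) = _
    rw [DirectSum.decomposeLinearEquiv_apply, DirectSum.decompose_of_mem 𝒮' h,
      ← DirectSum.lof_eq_of Φ, DirectSum.toModule_lof]
    rfl
  have hψφ : ∀ s : S, ψ (φ s) = s := by
    intro s
    refine DirectSum.Decomposition.inductionOn 𝒮 (motive := fun s => ψ (φ s) = s) ?_ ?_ ?_ s
    · show ψ (φ 0) = 0
      rw [map_zero, map_zero]
    · rintro σ ⟨s, h⟩
      show ψ (φ s) = s
      rw [hφ σ s h, hψ σ _ (hf1 σ s h)]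
      exact hGchar σ (f σ s h) (hf1 σ s h) s h (aux_liftRel_symm ℒ (hf2 σ s h))
    · intro a b ha hb
      rw [map_add, map_add, ha, hb]
  have hφψ : ∀ s' : S', φ (ψ s') = s' := by
    intro s'
    refine DirectSum.Decomposition.inductionOn 𝒮' (motive := fun s' => φ (ψ s') = s') ?_ ?_ ?_ s'
    · show φ (ψ 0) = 0
      rw [map_zero, map_zero]
    · rintro σ ⟨s, h⟩
      show φ (ψ s) = s
      rw [hψ σ s h, hφ σ _ (hg1 σ s h)]
      exact hFchar σ (g σ s h) (hg1 σ s h) s h (aux_liftRel_symm ℒ (hg2 σ s h))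
    · intro a b ha hb
      rw [map_add, map_add, ha, hb]
  have hlie : ∀ s t : S, φ ⁅s, t⁆ = ⁅φ s, φ t⁆ := by
    intro s t
    refine DirectSum.Decomposition.inductionOn 𝒮
      (motive := fun s => ∀ t, φ ⁅s, t⁆ = ⁅φ s, φ t⁆) ?_ ?_ ?_ s t
    · intro t
      show φ ⁅(0 : S), t⁆ = ⁅φ 0, φ t⁆
      rw [zero_lie, map_zero, zero_lie]
    · rintro σ ⟨s, hsm⟩
      intro t
      refine DirectSum.Decomposition.inductionOn 𝒮
        (motive := fun t => φ ⁅s, t⁆ = ⁅φ s, φ t⁆) ?_ ?_ ?_ t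
      · show φ ⁅s, (0 : S)⁆ = ⁅φ s, φ 0⁆
        rw [lie_zero, map_zero, lie_zero]
      · rintro τ ⟨t, htm⟩
        show φ ⁅s, t⁆ = ⁅φ s, φ t⁆
        have hb : ⁅s, t⁆ ∈ 𝒮 (σ * τ) := h𝒮 σ τ s t hsm htm
        rw [hφ σ s hsm, hφ τ t htm, hφ (σ * τ) _ hb]
        exact hFchar (σ * τ) _ hb _ (h𝒮' σ τ _ _ (hf1 σ s hsm) (hf1 τ t htm))
          (aux_liftRel_lie ℒ hℒ hsemiprime (hf2 σ s hsm) (hf2 τ t htm))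
      · intro a b ha hb
        rw [lie_add, map_add, ha, hb, map_add, lie_add]
    · intro a b ha hb t
      rw [add_lie, map_add, ha t, hb t, map_add, add_lie]
  have hid : ∀ x : L, φ (ι x) = ι' x := by
    intro x
    refine DirectSum.Decomposition.inductionOn ℒ (motive := fun x => φ (ι x) = ι' x) ?_ ?_ ?_ x
    · show φ (ι 0) = ι' 0
      rw [map_zero ι, map_zero, map_zero ι']
    · rintro ρ ⟨a, ha⟩
      show φ (ι a) = ι' a
      rw [hφ ρ (ι a) (hιgr ρ a ha)]
      exact hFchar ρ _ (hιgr ρ a ha) _ (hι'gr ρ a ha) (aux_liftRel_iota ℒ ι ι' a)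
    · intro a b ha hb
      rw [map_add ι, map_add, ha, hb, map_add ι']
  have hgr1 : ∀ (σ : G) (s : S), s ∈ 𝒮 σ → φ s ∈ 𝒮' σ := by
    intro σ s h
    rw [hφ σ s h]
    exact hf1 σ s h
  have hgr2 : ∀ (σ : G) (s' : S'), s' ∈ 𝒮' σ → ψ s' ∈ 𝒮 σ := by
    intro σ s h
    rw [hψ σ s h]
    exact hg1 σ s h
  refine ⟨{ toLieHom := { toLinearMap := φ, map_lie' := fun {x y} => hlie x y },
            invFun := ψ, left_inv := hψφ, right_inv := hφψ }, ?_, ?_⟩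
  · intro x
    exact hid x
  · intro σ s
    constructor
    · intro h
      exact hgr1 σ s h
    · intro h
      have h2 := hgr2 σ (φ s) h
      rwa [hψφ s] at h2
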